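/- arXiv:2012.10048 — 2 statements merged into one kernel-verified Lean document; each statement's English description precedes it below -/
import Mathlib

section
/- Let A_p(x,μ) = √(π/2)(x² + 2d(μ+iω₀))·[erf((μ+iω₀)/√(2ε)) - erf((μ₀+iω₀)/√(2ε))]·e^{(μ+iω₀)²/(2ε)} + 2d√ε·(1 - e^{(μ² - μ₀² + 2iω₀(μ-μ₀))/(2ε)}). Then A_p satisfies ε ∂_μ A_p = (μ+iω₀)A_p + √ε x² + ε d ∂_x² A_p with A_p(x,μ₀) = 0. -/
/-- The entire complex error function `erf z = (2/√π) ∫₀^z e^{-t²} dt`,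
parametrized along the straight segment from `0` to `z`. -/
noncomputable def cerf (z : ℂ) : ℂ :=
  (2 / Real.sqrt Real.pi : ℝ) * z * ∫ t in (0:ℝ)..1, Complex.exp (-(z * t)^2)

open Complex MeasureTheory Metric intervalIntegral
lemma aux_deriv (z t : ℂ) :
    HasDerivAt (fun w : ℂ => w * Complex.exp (-(w*t)^2))
      ((1 - 2*z^2*t^2) * Complex.exp (-(z*t)^2)) z := by
  have h1 : HasDerivAt (fun w : ℂ => -(w*t)^2) (-(2*z*t^2)) z := by
    have := (((hasDerivAt_id z).mul_const t).pow 2).neg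
    refine this.congr_deriv ?_
    simp only [id_eq]
    push_cast
    ring
  have h3 := (hasDerivAt_id z).mul h1.cexp
  refine h3.congr_deriv ?_
  simp only [id_eq]
  ring

lemma hasDerivAt_cerf (z : ℂ) :
    HasDerivAt cerf (((2 / Real.sqrt Real.pi : ℝ):ℂ) * Complex.exp (-z^2)) z := by
  have hG : HasDerivAt (fun w : ℂ => ∫ t in (0:ℝ)..1, w * Complex.exp (-(w*(t:ℂ))^2))
      (Complex.exp (-z^2)) z := by
    have main := intervalIntegral.hasDerivAt_integral_of_dominated_loc_of_deriv_le
      (F := fun (w : ℂ) (t : ℝ) => w * Complex.exp (-(w*(t:ℂ))^2))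
      (F' := fun (w : ℂ) (t : ℝ) => (1 - 2*w^2*(t:ℂ)^2) * Complex.exp (-(w*(t:ℂ))^2))
      (x₀ := z) (a := 0) (b := 1) (μ := volume)
      (bound := fun _ => (1 + 2*(‖z‖+1)^2) * Real.exp ((‖z‖+1)^2))
      (Metric.ball_mem_nhds z one_pos) ?_ ?_ ?_ ?_ ?_ ?_
    · have hcalc : (∫ t in (0:ℝ)..1, (1 - 2*z^2*(t:ℂ)^2) * Complex.exp (-(z*(t:ℂ))^2))
          = Complex.exp (-z^2) := by
        have hder : ∀ t ∈ Set.uIcc (0:ℝ) 1,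
            HasDerivAt (fun u : ℝ => (u:ℂ) * Complex.exp (-(z*(u:ℂ))^2))
              ((1 - 2*z^2*(t:ℂ)^2) * Complex.exp (-(z*(t:ℂ))^2)) t := by
          intro t _
          have h := (aux_deriv (t:ℂ) z).comp_ofReal
          have hfe : (fun u : ℝ => (u:ℂ) * Complex.exp (-(z*(u:ℂ))^2))
              = fun y : ℝ => (y:ℂ) * Complex.exp (-((y:ℂ)*z)^2) := by
            funext y; ring_nf
          rw [hfe]
          convert h using 1
          ring
        have hint : IntervalIntegrable
            (fun t : ℝ => (1 - 2*z^2*(t:ℂ)^2) * Complex.exp (-(z*(t:ℂ))^2)) volume 0 1 := by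
          apply Continuous.intervalIntegrable
          fun_prop
        have := intervalIntegral.integral_eq_sub_of_hasDerivAt hder hint
        simpa using this
      rw [← hcalc]
      exact main.2
    · filter_upwards with w
      apply Continuous.aestronglyMeasurable
      fun_prop
    · apply Continuous.intervalIntegrable; fun_prop
    · apply Continuous.aestronglyMeasurable; fun_prop
    · filter_upwards with t ht w hw
      have ht' : |t| ≤ 1 := by
        rw [Set.uIoc_of_le (by norm_num)] at ht
        rw [abs_le]; constructor <;> [linarith [ht.1]; linarith [ht.2]]
      have hw' : ‖w‖ ≤ ‖z‖ + 1 := by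
        have := mem_ball_iff_norm.mp hw
        have h2 := norm_sub_norm_le w z
        linarith
      rw [norm_mul]
      have hexp : ‖Complex.exp (-(w*(t:ℂ))^2)‖ ≤ Real.exp ((‖z‖+1)^2) := by
        rw [Complex.norm_exp]
        apply Real.exp_le_exp.mpr
        have hra : (-(w*(t:ℂ))^2).re ≤ ‖(-(w*(t:ℂ))^2)‖ := Complex.re_le_norm _
        refine hra.trans ?_
        rw [norm_neg, norm_pow, norm_mul, Complex.norm_real, Real.norm_eq_abs]
        calc (‖w‖ * |t|)^2 ≤ ((‖z‖+1) * 1)^2 := by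
              apply pow_le_pow_left₀ (by positivity)
              exact mul_le_mul hw' ht' (abs_nonneg t) (by positivity)
          _ = (‖z‖+1)^2 := by ring
      have hpoly : ‖(1 : ℂ) - 2*w^2*(t:ℂ)^2‖ ≤ 1 + 2*(‖z‖+1)^2 := by
        refine (norm_sub_le _ _).trans ?_
        rw [norm_one, norm_mul, norm_mul, norm_pow, norm_pow, Complex.norm_real,
          Real.norm_eq_abs]
        have h2 : ‖(2:ℂ)‖ = 2 := by norm_num
        rw [h2]
        have hw2 : ‖w‖^2 ≤ (‖z‖+1)^2 := pow_le_pow_left₀ (norm_nonneg w) hw' 2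
        have ht2 : |t|^2 ≤ 1 := by nlinarith [abs_nonneg t]
        have := mul_le_mul hw2 ht2 (by positivity) (by positivity)
        nlinarith
      exact mul_le_mul hpoly hexp (norm_nonneg _) (by positivity)
    · apply _root_.intervalIntegrable_const
    · filter_upwards with t ht w hw
      exact aux_deriv w (t:ℂ)
  have heq : cerf = fun w : ℂ => ((2 / Real.sqrt Real.pi : ℝ):ℂ) *
      ∫ t in (0:ℝ)..1, w * Complex.exp (-(w*(t:ℂ))^2) := by
    funext w
    simp only [cerf]
    rw [intervalIntegral.integral_const_mul, mul_assoc]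
  rw [heq]
  exact hG.const_mul _

set_option maxHeartbeats 1000000 in
theorem stmt_9 (ε ω₀ μ₀ : ℝ) (hε : 0 < ε) (hω₀ : 0 < ω₀) (d : ℂ)
    (Ap : ℝ → ℝ → ℂ)
    (hAp : ∀ x μ : ℝ, Ap x μ =
      (Real.sqrt (Real.pi/2) : ℂ) * ((x:ℂ)^2 + 2*d*((μ:ℂ) + Complex.I*ω₀)) *
        (cerf (((μ:ℂ) + Complex.I*ω₀)/(Real.sqrt (2*ε) : ℂ))
          - cerf (((μ₀:ℂ) + Complex.I*ω₀)/(Real.sqrt (2*ε) : ℂ))) *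
        Complex.exp (((μ:ℂ) + Complex.I*ω₀)^2/(2*(ε:ℂ)))
      + 2*d*(Real.sqrt ε : ℂ) *
        (1 - Complex.exp (((μ:ℂ)^2 - (μ₀:ℂ)^2
            + 2*Complex.I*(ω₀:ℂ)*((μ:ℂ) - (μ₀:ℂ)))/(2*(ε:ℂ))))) :
    (∀ x μ : ℝ, (ε:ℂ) * deriv (fun μ' => Ap x μ') μ
      = ((μ:ℂ) + Complex.I*ω₀) * Ap x μ
        + (Real.sqrt ε : ℂ) * (x:ℂ)^2
        + (ε:ℂ) * d * deriv (fun x' => deriv (fun x'' => Ap x'' μ) x') x)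
    ∧ ∀ x : ℝ, Ap x μ₀ = 0 := by
  have hεC : (ε:ℂ) ≠ 0 := Complex.ofReal_ne_zero.mpr hε.ne'
  have hSne : ((Real.sqrt (2*ε) : ℝ) : ℂ) ≠ 0 :=
    Complex.ofReal_ne_zero.mpr (ne_of_gt (Real.sqrt_pos.mpr (by positivity)))
  have hs2C : ((Real.sqrt (2*ε) : ℝ) : ℂ)^2 = 2*(ε:ℂ) := by
    rw [← Complex.ofReal_pow, Real.sq_sqrt (by positivity)]
    push_cast; ring
  have key2R : Real.sqrt (Real.pi/2) * (2 / Real.sqrt Real.pi) * ε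
      = Real.sqrt ε * Real.sqrt (2*ε) := by
    rw [Real.sqrt_div Real.pi_pos.le, Real.sqrt_mul (by norm_num : (0:ℝ) ≤ 2)]
    have h2 : (0:ℝ) < Real.sqrt 2 := by positivity
    have hπ : (0:ℝ) < Real.sqrt Real.pi := Real.sqrt_pos.mpr Real.pi_pos
    have m2 : Real.sqrt 2 * Real.sqrt 2 = 2 := Real.mul_self_sqrt (by norm_num)
    have mε : Real.sqrt ε * Real.sqrt ε = ε := Real.mul_self_sqrt hε.le
    field_simp
    linear_combination (-(Real.sqrt 2 * Real.sqrt 2)) * mε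
      - ε * m2
  have key2C : (Real.sqrt (Real.pi/2) : ℂ) * ((2 / Real.sqrt Real.pi : ℝ) : ℂ) * (ε:ℂ)
      = (Real.sqrt ε : ℂ) * (Real.sqrt (2*ε) : ℂ) := by
    exact_mod_cast congrArg (Complex.ofReal) key2R
  constructor
  · intro x μ
    -- chain rule in μ (as a complex derivative restricted to ℝ)
    have hlin : HasDerivAt (fun w : ℂ => w + Complex.I*(ω₀:ℂ)) 1 (μ:ℂ) := by
      simpa using (hasDerivAt_id ((μ:ℂ))).add_const (Complex.I*(ω₀:ℂ))
    have hcerf : HasDerivAt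
        (fun w : ℂ => cerf ((w + Complex.I*(ω₀:ℂ))/(Real.sqrt (2*ε) : ℂ)))
        (((2 / Real.sqrt Real.pi : ℝ):ℂ)
          * Complex.exp (-((((μ:ℂ) + Complex.I*ω₀))/(Real.sqrt (2*ε) : ℂ))^2)
          * (1/(Real.sqrt (2*ε) : ℂ))) (μ:ℂ) := by
      have h := (hasDerivAt_cerf ((((μ:ℂ) + Complex.I*ω₀))/(Real.sqrt (2*ε) : ℂ))).comp
        ((μ:ℂ)) (hlin.div_const ((Real.sqrt (2*ε) : ℂ)))
      simpa [Function.comp_def] using h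
    have hE := hcerf.sub_const (cerf (((μ₀:ℂ) + Complex.I*ω₀)/(Real.sqrt (2*ε) : ℂ)))
    have hexp1 : HasDerivAt
        (fun w : ℂ => Complex.exp ((w + Complex.I*(ω₀:ℂ))^2/(2*(ε:ℂ))))
        (Complex.exp (((μ:ℂ) + Complex.I*ω₀)^2/(2*(ε:ℂ)))
          * (2*((μ:ℂ) + Complex.I*ω₀)/(2*(ε:ℂ)))) (μ:ℂ) := by
      have h := ((hlin.pow 2).div_const (2*(ε:ℂ))).cexp
      refine h.congr_deriv ?_
      simp only [Pi.pow_apply]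
      push_cast; ring
    have hP : HasDerivAt (fun w : ℂ => (x:ℂ)^2 + 2*d*(w + Complex.I*(ω₀:ℂ)))
        (2*d) (μ:ℂ) := by
      have h := (hlin.const_mul (2*d)).const_add ((x:ℂ)^2)
      simpa using h
    have hterm1 := ((hP.const_mul ((Real.sqrt (Real.pi/2) : ℂ))).mul hE).mul hexp1
    have hq : HasDerivAt
        (fun w : ℂ => (w^2 - (μ₀:ℂ)^2 + 2*Complex.I*(ω₀:ℂ)*(w - (μ₀:ℂ)))/(2*(ε:ℂ)))
        (2*((μ:ℂ) + Complex.I*ω₀)/(2*(ε:ℂ))) (μ:ℂ) := by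
      have h := (((hasDerivAt_pow 2 ((μ:ℂ))).sub_const ((μ₀:ℂ)^2)).add
        (((hasDerivAt_id ((μ:ℂ))).sub_const ((μ₀:ℂ))).const_mul
          (2*Complex.I*(ω₀:ℂ)))).div_const (2*(ε:ℂ))
      refine h.congr_deriv ?_
      push_cast; ring
    have hterm2 := (hq.cexp.const_sub 1).const_mul (2*d*(Real.sqrt ε : ℂ))
    have htot := hterm1.add hterm2
    have hcl : HasDerivAt
        (fun w : ℂ => (Real.sqrt (Real.pi/2) : ℂ) * ((x:ℂ)^2 + 2*d*(w + Complex.I*ω₀)) *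
          (cerf ((w + Complex.I*ω₀)/(Real.sqrt (2*ε) : ℂ))
            - cerf (((μ₀:ℂ) + Complex.I*ω₀)/(Real.sqrt (2*ε) : ℂ))) *
          Complex.exp ((w + Complex.I*ω₀)^2/(2*(ε:ℂ)))
          + 2*d*(Real.sqrt ε : ℂ) *
            (1 - Complex.exp ((w^2 - (μ₀:ℂ)^2
              + 2*Complex.I*(ω₀:ℂ)*(w - (μ₀:ℂ)))/(2*(ε:ℂ)))))
        ((Real.sqrt (Real.pi/2) : ℂ) * (2*d) *
            (cerf (((μ:ℂ) + Complex.I*ω₀)/(Real.sqrt (2*ε) : ℂ))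
              - cerf (((μ₀:ℂ) + Complex.I*ω₀)/(Real.sqrt (2*ε) : ℂ))) *
            Complex.exp (((μ:ℂ) + Complex.I*ω₀)^2/(2*(ε:ℂ)))
          + (Real.sqrt (Real.pi/2) : ℂ) * ((x:ℂ)^2 + 2*d*((μ:ℂ) + Complex.I*ω₀)) *
            (((2 / Real.sqrt Real.pi : ℝ):ℂ)
              * Complex.exp (-((((μ:ℂ) + Complex.I*ω₀))/(Real.sqrt (2*ε) : ℂ))^2)
              * (1/(Real.sqrt (2*ε) : ℂ))) *
            Complex.exp (((μ:ℂ) + Complex.I*ω₀)^2/(2*(ε:ℂ)))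
          + (Real.sqrt (Real.pi/2) : ℂ) * ((x:ℂ)^2 + 2*d*((μ:ℂ) + Complex.I*ω₀)) *
            (cerf (((μ:ℂ) + Complex.I*ω₀)/(Real.sqrt (2*ε) : ℂ))
              - cerf (((μ₀:ℂ) + Complex.I*ω₀)/(Real.sqrt (2*ε) : ℂ))) *
            (Complex.exp (((μ:ℂ) + Complex.I*ω₀)^2/(2*(ε:ℂ)))
              * (2*((μ:ℂ) + Complex.I*ω₀)/(2*(ε:ℂ))))
          - 2*d*(Real.sqrt ε : ℂ) *
            (Complex.exp (((μ:ℂ)^2 - (μ₀:ℂ)^2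
                + 2*Complex.I*(ω₀:ℂ)*((μ:ℂ) - (μ₀:ℂ)))/(2*(ε:ℂ)))
              * (2*((μ:ℂ) + Complex.I*ω₀)/(2*(ε:ℂ))))) (μ:ℂ) := by
      refine htot.congr_deriv ?_
      simp only [Pi.mul_apply]
      ring
    have hfun : (fun μ' : ℝ => Ap x μ') = fun μ' : ℝ =>
        (Real.sqrt (Real.pi/2) : ℂ) * ((x:ℂ)^2 + 2*d*((μ':ℂ) + Complex.I*ω₀)) *
          (cerf (((μ':ℂ) + Complex.I*ω₀)/(Real.sqrt (2*ε) : ℂ))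
            - cerf (((μ₀:ℂ) + Complex.I*ω₀)/(Real.sqrt (2*ε) : ℂ))) *
          Complex.exp (((μ':ℂ) + Complex.I*ω₀)^2/(2*(ε:ℂ)))
        + 2*d*(Real.sqrt ε : ℂ) *
          (1 - Complex.exp (((μ':ℂ)^2 - (μ₀:ℂ)^2
              + 2*Complex.I*(ω₀:ℂ)*((μ':ℂ) - (μ₀:ℂ)))/(2*(ε:ℂ)))) :=
      funext fun μ' => hAp x μ'
    have hDμ : deriv (fun μ' : ℝ => Ap x μ') μ =
        ((Real.sqrt (Real.pi/2) : ℂ) * (2*d) *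
            (cerf (((μ:ℂ) + Complex.I*ω₀)/(Real.sqrt (2*ε) : ℂ))
              - cerf (((μ₀:ℂ) + Complex.I*ω₀)/(Real.sqrt (2*ε) : ℂ))) *
            Complex.exp (((μ:ℂ) + Complex.I*ω₀)^2/(2*(ε:ℂ)))
          + (Real.sqrt (Real.pi/2) : ℂ) * ((x:ℂ)^2 + 2*d*((μ:ℂ) + Complex.I*ω₀)) *
            (((2 / Real.sqrt Real.pi : ℝ):ℂ)
              * Complex.exp (-((((μ:ℂ) + Complex.I*ω₀))/(Real.sqrt (2*ε) : ℂ))^2)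
              * (1/(Real.sqrt (2*ε) : ℂ))) *
            Complex.exp (((μ:ℂ) + Complex.I*ω₀)^2/(2*(ε:ℂ)))
          + (Real.sqrt (Real.pi/2) : ℂ) * ((x:ℂ)^2 + 2*d*((μ:ℂ) + Complex.I*ω₀)) *
            (cerf (((μ:ℂ) + Complex.I*ω₀)/(Real.sqrt (2*ε) : ℂ))
              - cerf (((μ₀:ℂ) + Complex.I*ω₀)/(Real.sqrt (2*ε) : ℂ))) *
            (Complex.exp (((μ:ℂ) + Complex.I*ω₀)^2/(2*(ε:ℂ)))
              * (2*((μ:ℂ) + Complex.I*ω₀)/(2*(ε:ℂ))))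
          - 2*d*(Real.sqrt ε : ℂ) *
            (Complex.exp (((μ:ℂ)^2 - (μ₀:ℂ)^2
                + 2*Complex.I*(ω₀:ℂ)*((μ:ℂ) - (μ₀:ℂ)))/(2*(ε:ℂ)))
              * (2*((μ:ℂ) + Complex.I*ω₀)/(2*(ε:ℂ))))) := by
      rw [hfun]
      exact hcl.comp_ofReal.deriv
    -- the second x-derivative
    have hxK : ∀ y : ℝ, HasDerivAt (fun x'' : ℝ => Ap x'' μ)
        ((y:ℂ) * (2 * (Real.sqrt (Real.pi/2) : ℂ) *
          (cerf (((μ:ℂ) + Complex.I*ω₀)/(Real.sqrt (2*ε) : ℂ))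
            - cerf (((μ₀:ℂ) + Complex.I*ω₀)/(Real.sqrt (2*ε) : ℂ))) *
          Complex.exp (((μ:ℂ) + Complex.I*ω₀)^2/(2*(ε:ℂ))))) y := by
      intro y
      have hc : HasDerivAt (fun w : ℂ =>
          (Real.sqrt (Real.pi/2) : ℂ) * (w^2 + 2*d*((μ:ℂ) + Complex.I*ω₀)) *
            (cerf (((μ:ℂ) + Complex.I*ω₀)/(Real.sqrt (2*ε) : ℂ))
              - cerf (((μ₀:ℂ) + Complex.I*ω₀)/(Real.sqrt (2*ε) : ℂ))) *
            Complex.exp (((μ:ℂ) + Complex.I*ω₀)^2/(2*(ε:ℂ)))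
          + 2*d*(Real.sqrt ε : ℂ) *
            (1 - Complex.exp (((μ:ℂ)^2 - (μ₀:ℂ)^2
                + 2*Complex.I*(ω₀:ℂ)*((μ:ℂ) - (μ₀:ℂ)))/(2*(ε:ℂ)))))
          ((y:ℂ) * (2 * (Real.sqrt (Real.pi/2) : ℂ) *
            (cerf (((μ:ℂ) + Complex.I*ω₀)/(Real.sqrt (2*ε) : ℂ))
              - cerf (((μ₀:ℂ) + Complex.I*ω₀)/(Real.sqrt (2*ε) : ℂ))) *
            Complex.exp (((μ:ℂ) + Complex.I*ω₀)^2/(2*(ε:ℂ))))) (y:ℂ) := by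
        have h := (((((hasDerivAt_pow 2 ((y:ℂ))).add_const
            (2*d*((μ:ℂ) + Complex.I*ω₀))).const_mul
            ((Real.sqrt (Real.pi/2) : ℂ))).mul_const
            (cerf (((μ:ℂ) + Complex.I*ω₀)/(Real.sqrt (2*ε) : ℂ))
              - cerf (((μ₀:ℂ) + Complex.I*ω₀)/(Real.sqrt (2*ε) : ℂ)))).mul_const
            (Complex.exp (((μ:ℂ) + Complex.I*ω₀)^2/(2*(ε:ℂ))))).add_const
            (2*d*(Real.sqrt ε : ℂ) *
              (1 - Complex.exp (((μ:ℂ)^2 - (μ₀:ℂ)^2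
                + 2*Complex.I*(ω₀:ℂ)*((μ:ℂ) - (μ₀:ℂ)))/(2*(ε:ℂ)))))
        refine h.congr_deriv ?_
        push_cast; ring
      have hfx : (fun x'' : ℝ => Ap x'' μ) = fun y' : ℝ =>
          (Real.sqrt (Real.pi/2) : ℂ) * ((y':ℂ)^2 + 2*d*((μ:ℂ) + Complex.I*ω₀)) *
            (cerf (((μ:ℂ) + Complex.I*ω₀)/(Real.sqrt (2*ε) : ℂ))
              - cerf (((μ₀:ℂ) + Complex.I*ω₀)/(Real.sqrt (2*ε) : ℂ))) *
            Complex.exp (((μ:ℂ) + Complex.I*ω₀)^2/(2*(ε:ℂ)))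
          + 2*d*(Real.sqrt ε : ℂ) *
            (1 - Complex.exp (((μ:ℂ)^2 - (μ₀:ℂ)^2
                + 2*Complex.I*(ω₀:ℂ)*((μ:ℂ) - (μ₀:ℂ)))/(2*(ε:ℂ)))) :=
        funext fun x'' => hAp x'' μ
      rw [hfx]
      exact hc.comp_ofReal
    have hd1 : deriv (fun x'' : ℝ => Ap x'' μ) = fun y : ℝ =>
        (y:ℂ) * (2 * (Real.sqrt (Real.pi/2) : ℂ) *
          (cerf (((μ:ℂ) + Complex.I*ω₀)/(Real.sqrt (2*ε) : ℂ))
            - cerf (((μ₀:ℂ) + Complex.I*ω₀)/(Real.sqrt (2*ε) : ℂ))) *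
          Complex.exp (((μ:ℂ) + Complex.I*ω₀)^2/(2*(ε:ℂ)))) :=
      funext fun y => (hxK y).deriv
    have hd2 : deriv (fun x' : ℝ => deriv (fun x'' : ℝ => Ap x'' μ) x') x =
        2 * (Real.sqrt (Real.pi/2) : ℂ) *
          (cerf (((μ:ℂ) + Complex.I*ω₀)/(Real.sqrt (2*ε) : ℂ))
            - cerf (((μ₀:ℂ) + Complex.I*ω₀)/(Real.sqrt (2*ε) : ℂ))) *
          Complex.exp (((μ:ℂ) + Complex.I*ω₀)^2/(2*(ε:ℂ))) := by
      rw [hd1]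
      have hc : HasDerivAt (fun y : ℝ => (y:ℂ) * (2 * (Real.sqrt (Real.pi/2) : ℂ) *
          (cerf (((μ:ℂ) + Complex.I*ω₀)/(Real.sqrt (2*ε) : ℂ))
            - cerf (((μ₀:ℂ) + Complex.I*ω₀)/(Real.sqrt (2*ε) : ℂ))) *
          Complex.exp (((μ:ℂ) + Complex.I*ω₀)^2/(2*(ε:ℂ)))))
          (2 * (Real.sqrt (Real.pi/2) : ℂ) *
          (cerf (((μ:ℂ) + Complex.I*ω₀)/(Real.sqrt (2*ε) : ℂ))
            - cerf (((μ₀:ℂ) + Complex.I*ω₀)/(Real.sqrt (2*ε) : ℂ))) *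
          Complex.exp (((μ:ℂ) + Complex.I*ω₀)^2/(2*(ε:ℂ)))) x := by
        have h := ((hasDerivAt_id ((x:ℂ))).mul_const
          (2 * (Real.sqrt (Real.pi/2) : ℂ) *
          (cerf (((μ:ℂ) + Complex.I*ω₀)/(Real.sqrt (2*ε) : ℂ))
            - cerf (((μ₀:ℂ) + Complex.I*ω₀)/(Real.sqrt (2*ε) : ℂ))) *
          Complex.exp (((μ:ℂ) + Complex.I*ω₀)^2/(2*(ε:ℂ))))).comp_ofReal
        simpa using h
      exact hc.deriv
    rw [hDμ, hd2, hAp x μ]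
    have hk1 : Complex.exp (-((((μ:ℂ) + Complex.I*ω₀))/(Real.sqrt (2*ε) : ℂ))^2)
        * Complex.exp (((μ:ℂ) + Complex.I*ω₀)^2/(2*(ε:ℂ))) = 1 := by
      rw [div_pow, hs2C, ← Complex.exp_add]
      simp
    have r3 : (Real.sqrt (Real.pi/2) : ℂ) * ((2 / Real.sqrt Real.pi : ℝ) : ℂ)
        * (1/(Real.sqrt (2*ε) : ℂ)) * (ε:ℂ) = (Real.sqrt ε : ℂ) := by
      have h : (Real.sqrt (Real.pi/2) : ℂ) * ((2 / Real.sqrt Real.pi : ℝ) : ℂ)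
          * (1/(Real.sqrt (2*ε) : ℂ)) * (ε:ℂ)
          = ((Real.sqrt (Real.pi/2) : ℂ) * ((2 / Real.sqrt Real.pi : ℝ) : ℂ) * (ε:ℂ))
            * (1/(Real.sqrt (2*ε) : ℂ)) := by ring
      rw [h, key2C, mul_assoc, mul_one_div_cancel hSne, mul_one]
    have hεinv : (ε:ℂ) * (ε:ℂ)⁻¹ = 1 := mul_inv_cancel₀ hεC
    linear_combination
      ((ε:ℂ) * (Real.sqrt (Real.pi/2) : ℂ) * ((x:ℂ)^2 + 2*d*((μ:ℂ) + Complex.I*ω₀))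
        * ((2 / Real.sqrt Real.pi : ℝ) : ℂ) * (1/(Real.sqrt (2*ε) : ℂ))) * hk1
      + ((x:ℂ)^2 + 2*d*((μ:ℂ) + Complex.I*ω₀)) * r3
      + (((Real.sqrt (Real.pi/2) : ℂ) * ((x:ℂ)^2 + 2*d*((μ:ℂ) + Complex.I*ω₀))
            * (cerf (((μ:ℂ) + Complex.I*ω₀)/(Real.sqrt (2*ε) : ℂ))
              - cerf (((μ₀:ℂ) + Complex.I*ω₀)/(Real.sqrt (2*ε) : ℂ)))
            * Complex.exp (((μ:ℂ) + Complex.I*ω₀)^2/(2*(ε:ℂ)))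
            * ((μ:ℂ) + Complex.I*ω₀)
          - 2*d*(Real.sqrt ε : ℂ)
            * Complex.exp (((μ:ℂ)^2 - (μ₀:ℂ)^2
                + 2*Complex.I*(ω₀:ℂ)*((μ:ℂ) - (μ₀:ℂ)))/(2*(ε:ℂ)))
            * ((μ:ℂ) + Complex.I*ω₀)) * hεinv)
  · intro x
    rw [hAp x μ₀]
    have h1 : cerf (((μ₀:ℂ) + Complex.I*ω₀)/(Real.sqrt (2*ε) : ℂ))
        - cerf (((μ₀:ℂ) + Complex.I*ω₀)/(Real.sqrt (2*ε) : ℂ)) = 0 := sub_self _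
    have h2 : ((μ₀:ℂ)^2 - (μ₀:ℂ)^2 + 2*Complex.I*(ω₀:ℂ)*((μ₀:ℂ) - (μ₀:ℂ)))/(2*(ε:ℂ)) = 0 := by
      ring
    rw [h1, h2, Complex.exp_zero]
    ring
end

section
/- Let A_p(x,μ) = √(π/2) cos(x)·[erf((μ+iω₀-εd)/√(2ε)) - erf((μ₀+iω₀-εd)/√(2ε))]·e^{(μ+iω₀-εd)²/(2ε)}. Then A_p satisfies the linear CGL equation ε ∂_μ A_p = (μ+iω₀)A_p + √ε cos(x) + ε d ∂_x² A_p with A_p(x,μ₀) = 0. -/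
open Complex MeasureTheory intervalIntegral Metric Filter

lemma cerf_hasDerivAt (z : ℂ) :
    HasDerivAt cerf (((2 / Real.sqrt Real.pi : ℝ) : ℂ) * Complex.exp (-z^2)) z := by
  have hcont : ∀ w : ℂ, Continuous (fun t : ℝ => Complex.exp (-(w*(t:ℂ))^2)) := by
    intro w; fun_prop
  have hcont' : ∀ w : ℂ, Continuous (fun t : ℝ =>
      (-2*w*(t:ℂ)^2) * Complex.exp (-(w*(t:ℂ))^2)) := by
    intro w; fun_prop
  -- differentiation under the integral sign
  have hG := intervalIntegral.hasDerivAt_integral_of_dominated_loc_of_deriv_le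
    (μ := volume) (a := 0) (b := 1)
    (F := fun w t => Complex.exp (-(w*(t:ℂ))^2))
    (F' := fun w t => (-2*w*(t:ℂ)^2) * Complex.exp (-(w*(t:ℂ))^2))
    (x₀ := z) (bound := fun _ => 2*(‖z‖+1)*Real.exp ((‖z‖+1)^2))
    (ball_mem_nhds z one_pos)
    (Eventually.of_forall fun w => ((hcont w).aestronglyMeasurable))
    ((hcont z).intervalIntegrable _ _)
    ((hcont' z).aestronglyMeasurable)
    (by
      refine Eventually.of_forall fun t ht w hw => ?_
      have ht' : t ∈ Set.Ioc (0:ℝ) 1 := by simpa [Set.uIoc_of_le] using ht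
      have hwle : ‖w‖ ≤ ‖z‖ + 1 := by
        have := mem_ball_iff_norm.mp hw
        calc ‖w‖ = ‖z + (w - z)‖ := by ring_nf
        _ ≤ ‖z‖ + ‖w - z‖ := norm_add_le _ _
        _ ≤ ‖z‖ + 1 := by linarith
      have htn : ‖(t:ℂ)‖ ≤ 1 := by
        simp only [Complex.norm_real, Real.norm_eq_abs, abs_le]
        constructor <;> linarith [ht'.1, ht'.2]
      have hexp : ‖Complex.exp (-(w*(t:ℂ))^2)‖ ≤ Real.exp ((‖z‖+1)^2) := by
        rw [Complex.norm_exp]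
        apply Real.exp_le_exp.mpr
        have h0 : ‖w*(t:ℂ)‖ ≤ ‖z‖+1 := by
          rw [norm_mul]
          calc ‖w‖ * ‖(t:ℂ)‖ ≤ (‖z‖+1) * 1 :=
            mul_le_mul hwle htn (norm_nonneg _) (by positivity)
          _ = ‖z‖+1 := mul_one _
        calc (-(w*(t:ℂ))^2).re ≤ ‖(-(w*(t:ℂ))^2)‖ := Complex.re_le_norm _
        _ = ‖w*(t:ℂ)‖^2 := by rw [norm_neg, norm_pow]
        _ ≤ (‖z‖+1)^2 := by nlinarith [norm_nonneg (w*(t:ℂ))]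
      have hA : ‖(-2*w*(t:ℂ)^2 : ℂ)‖ ≤ 2*(‖z‖+1) := by
        have he : ‖(-2*w*(t:ℂ)^2 : ℂ)‖ = 2 * ‖w‖ * ‖(t:ℂ)‖^2 := by
          rw [norm_mul, norm_mul, norm_neg, norm_pow]
          norm_num
        rw [he]
        have h1 : ‖(t:ℂ)‖^2 ≤ 1 := pow_le_one₀ (norm_nonneg _) htn
        nlinarith [h1, hwle, norm_nonneg w, sq_nonneg ‖(t:ℂ)‖,
          mul_nonneg (norm_nonneg w) (sq_nonneg ‖(t:ℂ)‖)]
      calc ‖(-2*w*(t:ℂ)^2) * Complex.exp (-(w*(t:ℂ))^2)‖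
          = ‖(-2*w*(t:ℂ)^2 : ℂ)‖ * ‖Complex.exp (-(w*(t:ℂ))^2)‖ := norm_mul _ _
        _ ≤ (2*(‖z‖+1)) * Real.exp ((‖z‖+1)^2) :=
            mul_le_mul hA hexp (norm_nonneg _) (by positivity)
        _ = 2*(‖z‖+1)*Real.exp ((‖z‖+1)^2) := by ring)
    (intervalIntegrable_const)
    (by
      refine Eventually.of_forall fun t ht w hw => ?_
      have h1 := (((hasDerivAt_id w).mul_const ((t:ℝ):ℂ)).pow 2).neg
      have h2 := h1.cexp
      refine h2.congr_deriv ?_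
      simp only [id_eq, Pi.neg_apply, Pi.pow_apply]
      push_cast
      ring)
  -- FTC computation
  have key : ∀ t : ℝ, HasDerivAt (fun t : ℝ => (t:ℂ) * Complex.exp (-(z*(t:ℂ))^2))
      (Complex.exp (-(z*(t:ℂ))^2) + z * ((-2*z*(t:ℂ)^2) * Complex.exp (-(z*(t:ℂ))^2))) t := by
    intro t
    have ht : HasDerivAt (fun t:ℝ => ((t:ℝ):ℂ)) 1 t := by
      simpa using (hasDerivAt_id t).ofReal_comp (z := t)
    have h := ((ht.const_mul z).mul (ht.const_mul z)).neg
    have h2 : HasDerivAt (fun t:ℝ => -(z*(t:ℂ))^2) (-(z*1*(z*(t:ℂ)) + z*(t:ℂ)*(z*1))) t := by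
      simpa only [← pow_two, Pi.pow_def, Pi.neg_def] using h
    have h4 := ht.mul h2.cexp
    refine h4.congr_deriv ?_
    ring
  have hFTC : (∫ t in (0:ℝ)..1, (Complex.exp (-(z*(t:ℂ))^2)
      + z * ((-2*z*(t:ℂ)^2) * Complex.exp (-(z*(t:ℂ))^2)))) = Complex.exp (-z^2) := by
    rw [intervalIntegral.integral_eq_sub_of_hasDerivAt (fun t _ => key t)
      (((hcont z).add (continuous_const.mul (hcont' z))).intervalIntegrable _ _)]
    simp
  have hsplit : (∫ t in (0:ℝ)..1, Complex.exp (-(z*(t:ℂ))^2))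
      + z * (∫ t in (0:ℝ)..1, (-2*z*(t:ℂ)^2) * Complex.exp (-(z*(t:ℂ))^2))
      = Complex.exp (-z^2) := by
    rw [← hFTC, ← intervalIntegral.integral_const_mul,
      ← intervalIntegral.integral_add (g := fun t => z * ((-2*z*(t:ℂ)^2) * Complex.exp (-(z*(t:ℂ))^2))) ((hcont z).intervalIntegrable _ _)
        ((continuous_const.mul (hcont' z)).intervalIntegrable _ _)]
  -- assemble
  have hmul : HasDerivAt (fun w : ℂ => ((2 / Real.sqrt Real.pi : ℝ):ℂ) * w)
      (((2 / Real.sqrt Real.pi : ℝ):ℂ) * 1) z := (hasDerivAt_id z).const_mul _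
  have hfin := hmul.mul hG.2
  have : HasDerivAt cerf
      (((2 / Real.sqrt Real.pi : ℝ):ℂ) * 1 * (∫ t in (0:ℝ)..1, Complex.exp (-(z*(t:ℂ))^2))
        + ((2 / Real.sqrt Real.pi : ℝ):ℂ) * z *
          (∫ t in (0:ℝ)..1, (-2*z*(t:ℂ)^2) * Complex.exp (-(z*(t:ℂ))^2))) z := hfin
  convert this using 1
  rw [mul_one, ← hsplit]
  ring

theorem stmt_10 (ε ω₀ μ₀ : ℝ) (hε : 0 < ε) (hω₀ : 0 < ω₀) (d : ℂ)
    (Ap : ℝ → ℝ → ℂ)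
    (hAp : ∀ x μ : ℝ, Ap x μ =
      (Real.sqrt (Real.pi/2) : ℂ) * (Real.cos x : ℂ) *
        (cerf (((μ:ℂ) + Complex.I*ω₀ - (ε:ℂ)*d)/(Real.sqrt (2*ε) : ℂ))
          - cerf (((μ₀:ℂ) + Complex.I*ω₀ - (ε:ℂ)*d)/(Real.sqrt (2*ε) : ℂ))) *
        Complex.exp (((μ:ℂ) + Complex.I*ω₀ - (ε:ℂ)*d)^2/(2*(ε:ℂ)))) :
    (∀ x μ : ℝ, (ε:ℂ) * deriv (fun μ' => Ap x μ') μ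
      = ((μ:ℂ) + Complex.I*ω₀) * Ap x μ
        + (Real.sqrt ε : ℂ) * (Real.cos x : ℂ)
        + (ε:ℂ) * d * deriv (fun x' => deriv (fun x'' => Ap x'' μ) x') x)
    ∧ ∀ x : ℝ, Ap x μ₀ = 0 := by
  have hεC : ((ε:ℝ):ℂ) ≠ 0 := Complex.ofReal_ne_zero.mpr hε.ne'
  have hspos : 0 < Real.sqrt (2*ε) := Real.sqrt_pos.mpr (by positivity)
  have hsne : ((Real.sqrt (2*ε) : ℝ):ℂ) ≠ 0 := Complex.ofReal_ne_zero.mpr hspos.ne'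
  have hs2 : ((Real.sqrt (2*ε) : ℝ):ℂ)^2 = 2*(ε:ℂ) := by
    rw [← Complex.ofReal_pow, Real.sq_sqrt (by positivity : (0:ℝ) ≤ 2*ε)]
    push_cast; ring
  constructor
  · intro x μ
    -- derivative in μ
    have hu : HasDerivAt (fun w : ℂ => w + Complex.I*(ω₀:ℂ) - (ε:ℂ)*d) 1 (μ:ℂ) := by
      simpa using ((hasDerivAt_id ((μ:ℂ))).add_const (Complex.I*(ω₀:ℂ))).sub_const ((ε:ℂ)*d)
    have hf : HasDerivAt (fun w : ℂ => (w + Complex.I*(ω₀:ℂ) - (ε:ℂ)*d)/(Real.sqrt (2*ε) : ℂ))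
        (1/(Real.sqrt (2*ε) : ℂ)) (μ:ℂ) := by
      simpa using hu.div_const ((Real.sqrt (2*ε) : ℝ):ℂ)
    have hcf : HasDerivAt
        (fun w : ℂ => cerf ((w + Complex.I*(ω₀:ℂ) - (ε:ℂ)*d)/(Real.sqrt (2*ε) : ℂ)))
        (((2 / Real.sqrt Real.pi : ℝ) : ℂ)
          * Complex.exp (-((((μ:ℂ) + Complex.I*ω₀ - (ε:ℂ)*d))/(Real.sqrt (2*ε) : ℂ))^2)
          * (1/(Real.sqrt (2*ε) : ℂ))) (μ:ℂ) := by
      have := (cerf_hasDerivAt ((((μ:ℂ) + Complex.I*ω₀ - (ε:ℂ)*d))/(Real.sqrt (2*ε) : ℂ))).comp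
        (μ:ℂ) hf
      simpa [Function.comp_def] using this
    have hu2 : HasDerivAt (fun w : ℂ => (w + Complex.I*(ω₀:ℂ) - (ε:ℂ)*d)^2)
        (1*((μ:ℂ) + Complex.I*ω₀ - (ε:ℂ)*d) + ((μ:ℂ) + Complex.I*ω₀ - (ε:ℂ)*d)*1) (μ:ℂ) := by
      simpa only [← pow_two, Pi.pow_def] using hu.mul hu
    have hexp := (hu2.div_const (2*(ε:ℂ))).cexp
    have hmain := ((hcf.sub_const (cerf (((μ₀:ℂ) + Complex.I*ω₀ - (ε:ℂ)*d)/(Real.sqrt (2*ε) : ℂ)))).const_mul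
      ((Real.sqrt (Real.pi/2) : ℂ) * (Real.cos x : ℂ))).mul hexp
    have hAμ : HasDerivAt (fun μ' : ℝ => Ap x μ')
        ((Real.sqrt (Real.pi/2) : ℂ) * (Real.cos x : ℂ) *
            (((2 / Real.sqrt Real.pi : ℝ) : ℂ)
              * Complex.exp (-((((μ:ℂ) + Complex.I*ω₀ - (ε:ℂ)*d))/(Real.sqrt (2*ε) : ℂ))^2)
              * (1/(Real.sqrt (2*ε) : ℂ)))
          * Complex.exp (((μ:ℂ) + Complex.I*ω₀ - (ε:ℂ)*d)^2/(2*(ε:ℂ)))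
        + (Real.sqrt (Real.pi/2) : ℂ) * (Real.cos x : ℂ) *
            (cerf (((μ:ℂ) + Complex.I*ω₀ - (ε:ℂ)*d)/(Real.sqrt (2*ε) : ℂ))
              - cerf (((μ₀:ℂ) + Complex.I*ω₀ - (ε:ℂ)*d)/(Real.sqrt (2*ε) : ℂ)))
          * (Complex.exp (((μ:ℂ) + Complex.I*ω₀ - (ε:ℂ)*d)^2/(2*(ε:ℂ)))
             * ((1*((μ:ℂ) + Complex.I*ω₀ - (ε:ℂ)*d) + ((μ:ℂ) + Complex.I*ω₀ - (ε:ℂ)*d)*1)/(2*(ε:ℂ))))) μ := by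
      simp only [hAp]
      exact hmain.comp_ofReal
    rw [hAμ.deriv]
    -- derivatives in x
    have hXfun : (deriv fun x'' => Ap x'' μ) = fun x' : ℝ =>
        (Real.sqrt (Real.pi/2) : ℂ) * ((-Real.sin x' : ℝ) : ℂ) *
            (cerf (((μ:ℂ) + Complex.I*ω₀ - (ε:ℂ)*d)/(Real.sqrt (2*ε) : ℂ))
              - cerf (((μ₀:ℂ) + Complex.I*ω₀ - (ε:ℂ)*d)/(Real.sqrt (2*ε) : ℂ)))
          * Complex.exp (((μ:ℂ) + Complex.I*ω₀ - (ε:ℂ)*d)^2/(2*(ε:ℂ))) := by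
      funext x'
      have hc : HasDerivAt (fun x'' : ℝ => ((Real.cos x'' : ℝ):ℂ)) (((-Real.sin x' : ℝ):ℂ)) x' :=
        (Real.hasDerivAt_cos x').ofReal_comp
      have h := ((hc.const_mul ((Real.sqrt (Real.pi/2) : ℝ):ℂ)).mul_const
        (cerf (((μ:ℂ) + Complex.I*ω₀ - (ε:ℂ)*d)/(Real.sqrt (2*ε) : ℂ))
          - cerf (((μ₀:ℂ) + Complex.I*ω₀ - (ε:ℂ)*d)/(Real.sqrt (2*ε) : ℂ)))).mul_const
        (Complex.exp (((μ:ℂ) + Complex.I*ω₀ - (ε:ℂ)*d)^2/(2*(ε:ℂ))))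
      have h2 : HasDerivAt (fun x'' : ℝ => Ap x'' μ)
          ((Real.sqrt (Real.pi/2) : ℂ) * ((-Real.sin x' : ℝ) : ℂ) *
            (cerf (((μ:ℂ) + Complex.I*ω₀ - (ε:ℂ)*d)/(Real.sqrt (2*ε) : ℂ))
              - cerf (((μ₀:ℂ) + Complex.I*ω₀ - (ε:ℂ)*d)/(Real.sqrt (2*ε) : ℂ)))
          * Complex.exp (((μ:ℂ) + Complex.I*ω₀ - (ε:ℂ)*d)^2/(2*(ε:ℂ)))) x' := by
        simp only [hAp]; exact h
      exact h2.deriv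
    rw [hXfun]
    have hsin : HasDerivAt (fun x' : ℝ => ((-Real.sin x' : ℝ):ℂ)) (((-Real.cos x : ℝ):ℂ)) x := by
      exact ((Real.hasDerivAt_sin x).neg).ofReal_comp
    have hX2 := ((hsin.const_mul ((Real.sqrt (Real.pi/2) : ℝ):ℂ)).mul_const
        (cerf (((μ:ℂ) + Complex.I*ω₀ - (ε:ℂ)*d)/(Real.sqrt (2*ε) : ℂ))
          - cerf (((μ₀:ℂ) + Complex.I*ω₀ - (ε:ℂ)*d)/(Real.sqrt (2*ε) : ℂ)))).mul_const
        (Complex.exp (((μ:ℂ) + Complex.I*ω₀ - (ε:ℂ)*d)^2/(2*(ε:ℂ))))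
    rw [hX2.deriv, hAp x μ]
    have hq : (-((((μ:ℂ) + Complex.I*ω₀ - (ε:ℂ)*d))/(Real.sqrt (2*ε) : ℂ))^2)
        = -((((μ:ℂ) + Complex.I*ω₀ - (ε:ℂ)*d))^2/(2*(ε:ℂ))) := by
      rw [div_pow, hs2]
    rw [hq]
    have hee : Complex.exp (-((((μ:ℂ) + Complex.I*ω₀ - (ε:ℂ)*d))^2/(2*(ε:ℂ))))
        * Complex.exp ((((μ:ℂ) + Complex.I*ω₀ - (ε:ℂ)*d))^2/(2*(ε:ℂ))) = 1 := by
      rw [← Complex.exp_add]; simp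
    have hsqR : Real.sqrt (Real.pi/2) * (2/Real.sqrt Real.pi) * ε
        = Real.sqrt ε * Real.sqrt (2*ε) := by
      have hπ : 0 < Real.sqrt Real.pi := Real.sqrt_pos.mpr Real.pi_pos
      have h2 : Real.sqrt 2 * Real.sqrt 2 = 2 := Real.mul_self_sqrt (by norm_num)
      have hε' : Real.sqrt ε * Real.sqrt ε = ε := Real.mul_self_sqrt hε.le
      rw [show Real.pi/2 = Real.pi * 2⁻¹ by ring, Real.sqrt_mul Real.pi_pos.le,
        Real.sqrt_mul (by norm_num : (0:ℝ) ≤ 2) ε]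
      have h2inv : Real.sqrt 2⁻¹ = (Real.sqrt 2)⁻¹ := Real.sqrt_inv 2
      rw [h2inv]
      field_simp
      linear_combination (-(Real.sqrt 2*Real.sqrt 2)) * hε'
        - ε * h2
    have hsqC : ((Real.sqrt (Real.pi/2) : ℝ):ℂ) * ((2/Real.sqrt Real.pi : ℝ):ℂ) * (ε:ℂ)
        = ((Real.sqrt ε : ℝ):ℂ) * ((Real.sqrt (2*ε) : ℝ):ℂ) := by
      rw [← Complex.ofReal_mul, ← Complex.ofReal_mul, ← Complex.ofReal_mul, hsqR]
    have heinv : (2*(ε:ℂ)) * (1/(2*(ε:ℂ))) = 1 := by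
      rw [mul_one_div, div_self (by simpa using hεC)]
    have hsinv : ((Real.sqrt (2*ε) : ℝ):ℂ) * (1/((Real.sqrt (2*ε) : ℝ):ℂ)) = 1 := by
      rw [mul_one_div, div_self hsne]
    rw [Complex.ofReal_neg]
    linear_combination
      ((Real.sqrt (Real.pi/2) : ℂ) * (Real.cos x : ℂ) *
        (cerf (((μ:ℂ) + Complex.I*ω₀ - (ε:ℂ)*d)/(Real.sqrt (2*ε) : ℂ))
          - cerf (((μ₀:ℂ) + Complex.I*ω₀ - (ε:ℂ)*d)/(Real.sqrt (2*ε) : ℂ)))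
        * Complex.exp (((μ:ℂ) + Complex.I*ω₀ - (ε:ℂ)*d)^2/(2*(ε:ℂ)))
        * ((μ:ℂ) + Complex.I*ω₀ - (ε:ℂ)*d)) * heinv
      + ((ε:ℂ) * (Real.sqrt (Real.pi/2) : ℂ) * (Real.cos x : ℂ) * ((2/Real.sqrt Real.pi : ℝ):ℂ)
        * (1/((Real.sqrt (2*ε) : ℝ):ℂ))) * hee
      + ((Real.cos x : ℂ) * (1/((Real.sqrt (2*ε) : ℝ):ℂ))) * hsqC
      + (((Real.sqrt ε : ℝ):ℂ) * (Real.cos x : ℂ)) * hsinv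
  · intro x
    rw [hAp]
    simp
end
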